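/- Let U and V be real normed spaces, let B : U → V' be a continuous linear operator, and let M, γ > 0 satisfy ‖Bw‖_{V'} ≤ M‖w‖_U and γ‖w‖_U ≤ ‖Bw‖_{V'} for all w ∈ U. Let ℓ ∈ V' and u ∈ U with Bu = ℓ, let U_n ⊆ U be a subspace, and let u_n ∈ U_n be a residual minimizer over U_n, i.e. ‖ℓ - Bu_n‖_{V'} ≤ ‖ℓ - Bw_n‖_{V'} for all w_n ∈ U_n. Then u_n is a quasi-best approximation of u: ‖u - u_n‖_U ≤ (M/γ)·‖u - w_n‖_U for every w_n ∈ U_n. -/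
import Mathlib

/-- Quasi-best approximation for residual minimization: if `B : U → V'` is bounded above
and below and `u_n` minimizes the residual `‖ℓ - B w_n‖` over a subspace `U_n`, then
`‖u - u_n‖ ≤ (M/γ) ‖u - w_n‖` for every `w_n ∈ U_n`, where `B u = ℓ`. -/
theorem statement11 {U V : Type*} [NormedAddCommGroup U] [NormedSpace ℝ U]
    [NormedAddCommGroup V] [NormedSpace ℝ V]
    (B : U →L[ℝ] V →L[ℝ] ℝ) (M γ : ℝ) (hM : 0 < M) (hγ : 0 < γ)
    (hbound : ∀ w : U, ‖B w‖ ≤ M * ‖w‖) (hbelow : ∀ w : U, γ * ‖w‖ ≤ ‖B w‖)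
    (ℓ : V →L[ℝ] ℝ) (u : U) (hu : B u = ℓ)
    (Un : Submodule ℝ U) (un : U) (hun : un ∈ Un)
    (hmin : ∀ wn ∈ Un, ‖ℓ - B un‖ ≤ ‖ℓ - B wn‖) :
    ∀ wn ∈ Un, ‖u - un‖ ≤ (M / γ) * ‖u - wn‖ := by
  intro wn hwn
  have h1 : γ * ‖u - un‖ ≤ ‖B (u - un)‖ := hbelow _
  have h2 : ‖B (u - wn)‖ ≤ M * ‖u - wn‖ := hbound _
  have e1 : B (u - un) = ℓ - B un := by rw [map_sub, hu]
  have e2 : B (u - wn) = ℓ - B wn := by rw [map_sub, hu]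
  have h3 : γ * ‖u - un‖ ≤ M * ‖u - wn‖ := by
    calc γ * ‖u - un‖ ≤ ‖B (u - un)‖ := h1
      _ = ‖ℓ - B un‖ := by rw [e1]
      _ ≤ ‖ℓ - B wn‖ := hmin wn hwn
      _ = ‖B (u - wn)‖ := by rw [e2]
      _ ≤ M * ‖u - wn‖ := h2
  rw [div_mul_eq_mul_div, le_div_iff₀ hγ, mul_comm]
  linarith
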